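/- (Mehler formula) Let Ω = -ℏ² d²/dx² + x² act on L²(ℝ), ℏ > 0, t > 0. The integral kernel of exp(-tΩ) is P(t,x,y) = (2π ℏ sinh(2tℏ))^{-1/2} exp( -(1/(2ℏ sinh(2tℏ))) ( cosh(2tℏ)(x² + y²) - 2xy ) ). -/

import Mathlib

open scoped Real Topology

noncomputable section

open Filter MeasureTheory

/-- The Mehler kernel
`P(t,x,y) = (2πℏ sinh(2tℏ))^{-1/2} exp( -(cosh(2tℏ)(x²+y²) - 2xy) / (2ℏ sinh(2tℏ)) )`. -/
def mehlerKernel (ℏ t x y : ℝ) : ℝ :=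
  (Real.sqrt (2 * π * ℏ * Real.sinh (2 * t * ℏ)))⁻¹ *
    Real.exp (-(1 / (2 * ℏ * Real.sinh (2 * t * ℏ))) *
      (Real.cosh (2 * t * ℏ) * (x ^ 2 + y ^ 2) - 2 * x * y))

lemma mehler_hasDerivAt_x (ℏ t y x : ℝ) :
    HasDerivAt (fun x' => mehlerKernel ℏ t x' y)
      (-(1 / (2 * ℏ * Real.sinh (2 * t * ℏ))) * (Real.cosh (2 * t * ℏ) * (2 * x) - 2 * y)
        * mehlerKernel ℏ t x y) x := by
  unfold mehlerKernel
  have h0 : HasDerivAt (fun x' : ℝ => Real.cosh (2 * t * ℏ) * (x' ^ 2 + y ^ 2) - 2 * x' * y)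
      (Real.cosh (2 * t * ℏ) * (2 * x) - 2 * y) x := by
    have h1 : HasDerivAt (fun x' : ℝ => x' ^ 2 + y ^ 2) (2 * x) x := by
      simpa using (hasDerivAt_pow 2 x).add_const (y ^ 2)
    have h2 : HasDerivAt (fun x' : ℝ => 2 * x' * y) (2 * y) x := by
      simpa [mul_comm, mul_assoc, mul_left_comm] using
        (hasDerivAt_id x).const_mul (2 * y)
    exact (h1.const_mul (Real.cosh (2 * t * ℏ))).sub h2
  have h3 := ((h0.const_mul (-(1 / (2 * ℏ * Real.sinh (2 * t * ℏ))))).exp).const_mul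
      (Real.sqrt (2 * π * ℏ * Real.sinh (2 * t * ℏ)))⁻¹
  refine h3.congr_deriv ?_
  ring

lemma mehler_deriv2_x (ℏ t y x : ℝ) :
    deriv (fun x' => deriv (fun x'' => mehlerKernel ℏ t x'' y) x') x
      = (-(1 / (2 * ℏ * Real.sinh (2 * t * ℏ))) * (Real.cosh (2 * t * ℏ) * 2)
          + (-(1 / (2 * ℏ * Real.sinh (2 * t * ℏ))) * (Real.cosh (2 * t * ℏ) * (2 * x) - 2 * y)) ^ 2)
        * mehlerKernel ℏ t x y := by
  have hd : (fun x' => deriv (fun x'' => mehlerKernel ℏ t x'' y) x')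
      = fun x' => (-(1 / (2 * ℏ * Real.sinh (2 * t * ℏ))) * (Real.cosh (2 * t * ℏ) * (2 * x') - 2 * y))
          * mehlerKernel ℏ t x' y := by
    funext x'
    exact (mehler_hasDerivAt_x ℏ t y x').deriv
  rw [hd]
  have hL : HasDerivAt (fun x' : ℝ => -(1 / (2 * ℏ * Real.sinh (2 * t * ℏ)))
      * (Real.cosh (2 * t * ℏ) * (2 * x') - 2 * y))
      (-(1 / (2 * ℏ * Real.sinh (2 * t * ℏ))) * (Real.cosh (2 * t * ℏ) * 2)) x := by
    have : HasDerivAt (fun x' : ℝ => Real.cosh (2 * t * ℏ) * (2 * x') - 2 * y)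
        (Real.cosh (2 * t * ℏ) * 2) x := by
      simpa [mul_assoc] using (((hasDerivAt_id x).const_mul 2).const_mul
        (Real.cosh (2 * t * ℏ))).sub_const (2 * y)
    exact this.const_mul _
  have h := hL.mul (mehler_hasDerivAt_x ℏ t y x)
  refine h.deriv.trans ?_
  ring
lemma mehler_hasDerivAt_t (ℏ x y : ℝ) (hℏ : 0 < ℏ) (t : ℝ) (ht : 0 < t) :
    HasDerivAt (fun s => mehlerKernel ℏ s x y)
      (-(1 / (2 * Real.sqrt (2 * π * ℏ * Real.sinh (2 * t * ℏ))) *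
            (2 * π * ℏ * (Real.cosh (2 * t * ℏ) * (2 * ℏ)))) /
          Real.sqrt (2 * π * ℏ * Real.sinh (2 * t * ℏ)) ^ 2 *
        Real.exp (-(1 / (2 * ℏ * Real.sinh (2 * t * ℏ))) *
          (Real.cosh (2 * t * ℏ) * (x ^ 2 + y ^ 2) - 2 * x * y))
      + (Real.sqrt (2 * π * ℏ * Real.sinh (2 * t * ℏ)))⁻¹ *
        (Real.exp (-(1 / (2 * ℏ * Real.sinh (2 * t * ℏ))) *
            (Real.cosh (2 * t * ℏ) * (x ^ 2 + y ^ 2) - 2 * x * y)) *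
          ((2 * ℏ * (Real.cosh (2 * t * ℏ) * (2 * ℏ)) / (2 * ℏ * Real.sinh (2 * t * ℏ)) ^ 2) *
              (Real.cosh (2 * t * ℏ) * (x ^ 2 + y ^ 2) - 2 * x * y)
            + -(2 * ℏ * Real.sinh (2 * t * ℏ))⁻¹ *
              (Real.sinh (2 * t * ℏ) * (2 * ℏ) * (x ^ 2 + y ^ 2))))) t := by
  have hs : 0 < Real.sinh (2 * t * ℏ) := Real.sinh_pos_iff.2 (by positivity)
  have hQ : 0 < 2 * π * ℏ * Real.sinh (2 * t * ℏ) := by positivity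
  have hQ2 : 0 < 2 * ℏ * Real.sinh (2 * t * ℏ) := by positivity
  -- derivative of inner argument
  have harg : HasDerivAt (fun s : ℝ => 2 * s * ℏ) (2 * ℏ) t := by
    simpa [mul_comm, mul_assoc, mul_left_comm] using (hasDerivAt_id t).const_mul (2 * ℏ)
  have hsinh : HasDerivAt (fun s : ℝ => Real.sinh (2 * s * ℏ))
      (Real.cosh (2 * t * ℏ) * (2 * ℏ)) t :=
    by
      have h := (Real.hasDerivAt_sinh (2 * t * ℏ)).comp t harg
      exact h
  have hcosh : HasDerivAt (fun s : ℝ => Real.cosh (2 * s * ℏ))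
      (Real.sinh (2 * t * ℏ) * (2 * ℏ)) t :=
    by
      have h := (Real.hasDerivAt_cosh (2 * t * ℏ)).comp t harg
      exact h
  -- factor A = (sqrt Q)⁻¹
  have hQd : HasDerivAt (fun s : ℝ => 2 * π * ℏ * Real.sinh (2 * s * ℏ))
      (2 * π * ℏ * (Real.cosh (2 * t * ℏ) * (2 * ℏ))) t := hsinh.const_mul _
  have hsqrt : HasDerivAt (fun s : ℝ => Real.sqrt (2 * π * ℏ * Real.sinh (2 * s * ℏ)))
      (1 / (2 * Real.sqrt (2 * π * ℏ * Real.sinh (2 * t * ℏ))) *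
        (2 * π * ℏ * (Real.cosh (2 * t * ℏ) * (2 * ℏ)))) t :=
    (Real.hasDerivAt_sqrt hQ.ne').comp t hQd
  have hA : HasDerivAt (fun s : ℝ => (Real.sqrt (2 * π * ℏ * Real.sinh (2 * s * ℏ)))⁻¹)
      (-(1 / (2 * Real.sqrt (2 * π * ℏ * Real.sinh (2 * t * ℏ))) *
            (2 * π * ℏ * (Real.cosh (2 * t * ℏ) * (2 * ℏ)))) /
          Real.sqrt (2 * π * ℏ * Real.sinh (2 * t * ℏ)) ^ 2) t :=
    hsqrt.inv (Real.sqrt_ne_zero'.2 hQ)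
  -- exponent
  have hQ2d : HasDerivAt (fun s : ℝ => 2 * ℏ * Real.sinh (2 * s * ℏ))
      (2 * ℏ * (Real.cosh (2 * t * ℏ) * (2 * ℏ))) t := hsinh.const_mul _
  have hinv : HasDerivAt (fun s : ℝ => -(2 * ℏ * Real.sinh (2 * s * ℏ))⁻¹)
      (2 * ℏ * (Real.cosh (2 * t * ℏ) * (2 * ℏ)) / (2 * ℏ * Real.sinh (2 * t * ℏ)) ^ 2) t := by
    refine (hQ2d.inv hQ2.ne').neg.congr_deriv ?_
    ring
  have hN : HasDerivAt (fun s : ℝ => Real.cosh (2 * s * ℏ) * (x ^ 2 + y ^ 2) - 2 * x * y)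
      (Real.sinh (2 * t * ℏ) * (2 * ℏ) * (x ^ 2 + y ^ 2)) t :=
    (hcosh.mul_const _).sub_const _
  have hg : HasDerivAt (fun s : ℝ => -(2 * ℏ * Real.sinh (2 * s * ℏ))⁻¹ *
        (Real.cosh (2 * s * ℏ) * (x ^ 2 + y ^ 2) - 2 * x * y))
      ((2 * ℏ * (Real.cosh (2 * t * ℏ) * (2 * ℏ)) / (2 * ℏ * Real.sinh (2 * t * ℏ)) ^ 2) *
          (Real.cosh (2 * t * ℏ) * (x ^ 2 + y ^ 2) - 2 * x * y)
        + -(2 * ℏ * Real.sinh (2 * t * ℏ))⁻¹ *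
          (Real.sinh (2 * t * ℏ) * (2 * ℏ) * (x ^ 2 + y ^ 2))) t := hinv.mul hN
  have hE := hg.exp
  have := hA.mul hE
  simp only [mehlerKernel, one_div] at this ⊢
  convert this using 2
  all_goals rfl

lemma part1 (ℏ : ℝ) (hℏ : 0 < ℏ) (t : ℝ) (ht : 0 < t) (x y : ℝ) :
    HasDerivAt (fun s => mehlerKernel ℏ s x y)
      (ℏ ^ 2 * deriv (fun x' => deriv (fun x'' => mehlerKernel ℏ t x'' y) x') x
        - x ^ 2 * mehlerKernel ℏ t x y) t := by
  have h := mehler_hasDerivAt_t ℏ x y hℏ t ht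
  have hs : 0 < Real.sinh (2 * t * ℏ) := Real.sinh_pos_iff.2 (by positivity)
  have hQ : 0 < 2 * π * ℏ * Real.sinh (2 * t * ℏ) := by positivity
  have hq : 0 < Real.sqrt (2 * π * ℏ * Real.sinh (2 * t * ℏ)) := Real.sqrt_pos.2 hQ
  have hq2 : Real.sqrt (2 * π * ℏ * Real.sinh (2 * t * ℏ)) ^ 2
      = 2 * π * ℏ * Real.sinh (2 * t * ℏ) := Real.sq_sqrt hQ.le
  have hc : Real.cosh (2 * t * ℏ) ^ 2 = Real.sinh (2 * t * ℏ) ^ 2 + 1 := by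
    rw [Real.cosh_sq]
  rw [mehler_deriv2_x]
  convert h using 1
  unfold mehlerKernel
  set s := Real.sinh (2 * t * ℏ)
  set c := Real.cosh (2 * t * ℏ)
  set q := Real.sqrt (2 * π * ℏ * s)
  set E := Real.exp (-(1 / (2 * ℏ * s)) * (c * (x ^ 2 + y ^ 2) - 2 * x * y))
  have hπ : (0:ℝ) < π := Real.pi_pos
  field_simp
  ring_nf
  linear_combination (-(q^2 * E * y^2)) * hc + (-(E * ℏ * s * c)) * hq2

/-- scaled integrand after the change of variables `y = x + √(ℏ sinh(2tℏ)) z`. -/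
def mehlerG (ℏ x : ℝ) (u : ℝ → ℝ) (t z : ℝ) : ℝ :=
  Real.sqrt (ℏ * Real.sinh (2 * t * ℏ)) *
    mehlerKernel ℏ t x (x + Real.sqrt (ℏ * Real.sinh (2 * t * ℏ)) * z) *
    u (x + Real.sqrt (ℏ * Real.sinh (2 * t * ℏ)) * z)


lemma mehler_scaled (ℏ : ℝ) (hℏ : 0 < ℏ) (t : ℝ) (ht : 0 < t) (x z : ℝ) :
    Real.sqrt (ℏ * Real.sinh (2 * t * ℏ)) *
        mehlerKernel ℏ t x (x + Real.sqrt (ℏ * Real.sinh (2 * t * ℏ)) * z)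
      = (Real.sqrt (2 * π))⁻¹ * Real.exp (-(1/2) * z ^ 2) *
        Real.exp (-((Real.cosh (2 * t * ℏ) - 1) / (2 * ℏ * Real.sinh (2 * t * ℏ))) *
          (x ^ 2 + (x + Real.sqrt (ℏ * Real.sinh (2 * t * ℏ)) * z) ^ 2)) := by
  have hs : 0 < Real.sinh (2 * t * ℏ) := Real.sinh_pos_iff.2 (by positivity)
  have hσ2 : Real.sqrt (ℏ * Real.sinh (2 * t * ℏ)) ^ 2 = ℏ * Real.sinh (2 * t * ℏ) :=
    Real.sq_sqrt (by positivity)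
  have hσ : 0 < Real.sqrt (ℏ * Real.sinh (2 * t * ℏ)) := Real.sqrt_pos.2 (by positivity)
  have h2π : (0:ℝ) < Real.sqrt (2 * π) := Real.sqrt_pos.2 (by positivity)
  unfold mehlerKernel
  have hsplit : Real.sqrt (2 * π * ℏ * Real.sinh (2 * t * ℏ))
      = Real.sqrt (2 * π) * Real.sqrt (ℏ * Real.sinh (2 * t * ℏ)) := by
    rw [← Real.sqrt_mul (by positivity)]
    ring_nf
  set σ := Real.sqrt (ℏ * Real.sinh (2 * t * ℏ))
  have hA : -(1 / (2 * ℏ * Real.sinh (2 * t * ℏ))) *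
        (Real.cosh (2 * t * ℏ) * (x ^ 2 + (x + σ * z) ^ 2) - 2 * x * (x + σ * z))
      = -(1/2) * z ^ 2 + -((Real.cosh (2 * t * ℏ) - 1) / (2 * ℏ * Real.sinh (2 * t * ℏ))) *
          (x ^ 2 + (x + σ * z) ^ 2) := by
    field_simp
    have e : Real.sinh (2 * ℏ * t) = Real.sinh (2 * t * ℏ) := by
      rw [show (2:ℝ) * ℏ * t = 2 * t * ℏ by ring]
    linear_combination (-(z ^ 2)) * hσ2 + (z ^ 2 * ℏ) * e
  rw [hsplit, hA, Real.exp_add, mul_inv]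
  field_simp

lemma mehlerG_eq (ℏ : ℝ) (hℏ : 0 < ℏ) (u : ℝ → ℝ) (t : ℝ) (ht : 0 < t) (x z : ℝ) :
    mehlerG ℏ x u t z
      = (Real.sqrt (2 * π))⁻¹ * Real.exp (-(1/2) * z ^ 2) *
        Real.exp (-((Real.cosh (2 * t * ℏ) - 1) / (2 * ℏ * Real.sinh (2 * t * ℏ))) *
          (x ^ 2 + (x + Real.sqrt (ℏ * Real.sinh (2 * t * ℏ)) * z) ^ 2)) *
        u (x + Real.sqrt (ℏ * Real.sinh (2 * t * ℏ)) * z) := by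
  unfold mehlerG
  rw [mehler_scaled ℏ hℏ t ht x z]

lemma part2 (ℏ : ℝ) (hℏ : 0 < ℏ) (u : ℝ → ℝ) (hu : Continuous u)
    (hcs : HasCompactSupport u) (x : ℝ) :
    Filter.Tendsto (fun t => ∫ y : ℝ, mehlerKernel ℏ t x y * u y)
      (𝓝[>] 0) (𝓝 (u x)) := by
  obtain ⟨M, hM⟩ := hcs.exists_bound_of_continuous hu
  -- change of variables
  have key : ∀ t, 0 < t → (∫ y, mehlerKernel ℏ t x y * u y) = ∫ z, mehlerG ℏ x u t z := by
    intro t ht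
    have hs : 0 < Real.sinh (2 * t * ℏ) := Real.sinh_pos_iff.2 (by positivity)
    set σ := Real.sqrt (ℏ * Real.sinh (2 * t * ℏ)) with hσdef
    have hσt : 0 < σ := Real.sqrt_pos.2 (by positivity)
    have h1 : (∫ z : ℝ, mehlerKernel ℏ t x (x + σ * z) * u (x + σ * z))
        = |σ⁻¹| • ∫ w, mehlerKernel ℏ t x (x + w) * u (x + w) := by
      simpa using MeasureTheory.Measure.integral_comp_mul_left
        (fun w => mehlerKernel ℏ t x (x + w) * u (x + w)) σ
    have h2 : (∫ w, mehlerKernel ℏ t x (x + w) * u (x + w))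
        = ∫ y, mehlerKernel ℏ t x y * u y :=
      MeasureTheory.integral_add_left_eq_self (fun y => mehlerKernel ℏ t x y * u y) x
    have h3 : (∫ z, mehlerG ℏ x u t z)
        = σ * ∫ z, mehlerKernel ℏ t x (x + σ * z) * u (x + σ * z) := by
      rw [← MeasureTheory.integral_const_mul]
      congr 1
      funext z
      unfold mehlerG
      rw [← hσdef]
      ring
    rw [h3, h1, h2, abs_of_pos (inv_pos.2 hσt), smul_eq_mul]
    field_simp
  -- dominated convergence
  have hlim : Tendsto (fun t => ∫ z, mehlerG ℏ x u t z) (𝓝[>] 0)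
      (𝓝 (∫ z, (Real.sqrt (2 * π))⁻¹ * Real.exp (-(1/2) * z ^ 2) * u x)) := by
    apply MeasureTheory.tendsto_integral_filter_of_dominated_convergence
      (bound := fun z => (Real.sqrt (2 * π))⁻¹ * Real.exp (-(1/2) * z ^ 2) * M)
    · filter_upwards with t
      apply Continuous.aestronglyMeasurable
      unfold mehlerG mehlerKernel
      fun_prop
    · filter_upwards [self_mem_nhdsWithin] with t ht
      have ht' : 0 < t := ht
      apply Filter.Eventually.of_forall
      intro z
      have hs : 0 < Real.sinh (2 * t * ℏ) := Real.sinh_pos_iff.2 (by positivity)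
      rw [mehlerG_eq ℏ hℏ u t ht' x z, Real.norm_eq_abs, abs_mul]
      have hE : Real.exp (-((Real.cosh (2 * t * ℏ) - 1) / (2 * ℏ * Real.sinh (2 * t * ℏ))) *
            (x ^ 2 + (x + Real.sqrt (ℏ * Real.sinh (2 * t * ℏ)) * z) ^ 2)) ≤ 1 := by
        rw [Real.exp_le_one_iff]
        apply mul_nonpos_of_nonpos_of_nonneg
        · apply neg_nonpos_of_nonneg
          apply div_nonneg _ (by positivity)
          linarith [Real.one_le_cosh (2 * t * ℏ)]
        · positivity
      have h2π : (0:ℝ) < Real.sqrt (2 * π) := Real.sqrt_pos.2 (by positivity)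
      have habs : |(Real.sqrt (2 * π))⁻¹ * Real.exp (-(1/2) * z ^ 2) *
          Real.exp (-((Real.cosh (2 * t * ℏ) - 1) / (2 * ℏ * Real.sinh (2 * t * ℏ))) *
            (x ^ 2 + (x + Real.sqrt (ℏ * Real.sinh (2 * t * ℏ)) * z) ^ 2))|
          = (Real.sqrt (2 * π))⁻¹ * Real.exp (-(1/2) * z ^ 2) *
          Real.exp (-((Real.cosh (2 * t * ℏ) - 1) / (2 * ℏ * Real.sinh (2 * t * ℏ))) *
            (x ^ 2 + (x + Real.sqrt (ℏ * Real.sinh (2 * t * ℏ)) * z) ^ 2)) :=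
        abs_of_pos (by positivity)
      rw [habs]
      have hub := hM (x + Real.sqrt (ℏ * Real.sinh (2 * t * ℏ)) * z)
      rw [Real.norm_eq_abs] at hub
      have hm0 : (0:ℝ) ≤ M := le_trans (abs_nonneg _) hub
      calc (Real.sqrt (2 * π))⁻¹ * Real.exp (-(1/2) * z ^ 2) *
            Real.exp (-((Real.cosh (2 * t * ℏ) - 1) / (2 * ℏ * Real.sinh (2 * t * ℏ))) *
              (x ^ 2 + (x + Real.sqrt (ℏ * Real.sinh (2 * t * ℏ)) * z) ^ 2)) *
            |u (x + Real.sqrt (ℏ * Real.sinh (2 * t * ℏ)) * z)|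
          ≤ (Real.sqrt (2 * π))⁻¹ * Real.exp (-(1/2) * z ^ 2) * 1 * M := by gcongr
        _ = (Real.sqrt (2 * π))⁻¹ * Real.exp (-(1/2) * z ^ 2) * M := by ring
    · exact ((integrable_exp_neg_mul_sq (by norm_num : (0:ℝ) < 1/2)).const_mul
        (Real.sqrt (2 * π))⁻¹).mul_const M
    · apply Filter.Eventually.of_forall
      intro z
      have hσ0 : Tendsto (fun t => Real.sqrt (ℏ * Real.sinh (2 * t * ℏ))) (𝓝[>] 0) (𝓝 0) := by
        have hc : Continuous fun t : ℝ => Real.sqrt (ℏ * Real.sinh (2 * t * ℏ)) := by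
          fun_prop
        have h0 := hc.tendsto 0
        simp only [Real.sinh_zero, mul_zero, zero_mul, Real.sqrt_zero] at h0
        exact h0.mono_left nhdsWithin_le_nhds
      have hw : Tendsto (fun t => x + Real.sqrt (ℏ * Real.sinh (2 * t * ℏ)) * z)
          (𝓝[>] 0) (𝓝 x) := by
        have := (tendsto_const_nhds (x := x)).add (hσ0.mul_const z)
        simpa using this
      have hr : Tendsto (fun t => (Real.cosh (2 * t * ℏ) - 1) /
          (2 * ℏ * Real.sinh (2 * t * ℏ))) (𝓝[>] 0) (𝓝 0) := by
        have heq : ∀ᶠ t in 𝓝[>] (0:ℝ), (Real.cosh (2 * t * ℏ) - 1) /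
            (2 * ℏ * Real.sinh (2 * t * ℏ))
            = Real.sinh (t * ℏ) / Real.cosh (t * ℏ) / (2 * ℏ) := by
          filter_upwards [self_mem_nhdsWithin] with t ht
          have ht' : (0:ℝ) < t := ht
          have hsh : 0 < Real.sinh (t * ℏ) := Real.sinh_pos_iff.2 (by positivity)
          have hch : 0 < Real.cosh (t * ℏ) := Real.cosh_pos (x := t * ℏ)
          rw [show (2:ℝ) * t * ℏ = 2 * (t * ℏ) by ring, Real.cosh_two_mul,
            Real.sinh_two_mul, Real.cosh_sq]
          field_simp
          ring
        have hc : Continuous fun t : ℝ => Real.sinh (t * ℏ) / Real.cosh (t * ℏ) / (2 * ℏ) :=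
          Continuous.div_const ((Real.continuous_sinh.comp (continuous_id.mul continuous_const)).div
            (Real.continuous_cosh.comp (continuous_id.mul continuous_const))
            (fun s => (Real.cosh_pos (x := s * ℏ)).ne')) (2 * ℏ)
        have h0 := hc.tendsto 0
        simp only [zero_mul, Real.sinh_zero, zero_div] at h0
        exact (h0.mono_left nhdsWithin_le_nhds).congr'
          (by filter_upwards [heq] with t h using h.symm)
      have hx2 : Tendsto (fun t => x ^ 2 +
          (x + Real.sqrt (ℏ * Real.sinh (2 * t * ℏ)) * z) ^ 2) (𝓝[>] 0)
          (𝓝 (x ^ 2 + x ^ 2)) := tendsto_const_nhds.add (hw.pow 2)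
      have hexp : Tendsto (fun t => Real.exp (-((Real.cosh (2 * t * ℏ) - 1) /
          (2 * ℏ * Real.sinh (2 * t * ℏ))) *
          (x ^ 2 + (x + Real.sqrt (ℏ * Real.sinh (2 * t * ℏ)) * z) ^ 2)))
          (𝓝[>] 0) (𝓝 1) := by
        have h1 := hr.neg.mul hx2
        rw [neg_zero, zero_mul] at h1
        have h2 := (Real.continuous_exp.tendsto 0).comp h1
        simpa [Function.comp_def] using h2
      have hlim2 := ((tendsto_const_nhds (x := (Real.sqrt (2 * π))⁻¹ *
          Real.exp (-(1/2) * z ^ 2))).mul hexp).mul ((hu.tendsto x).comp hw)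
      simp only [Function.comp_def, mul_one] at hlim2
      apply hlim2.congr'
      filter_upwards [self_mem_nhdsWithin] with t ht
      exact (mehlerG_eq ℏ hℏ u t ht x z).symm
  have hg : (∫ z : ℝ, (Real.sqrt (2 * π))⁻¹ * Real.exp (-(1/2) * z ^ 2) * u x) = u x := by
    rw [MeasureTheory.integral_mul_const, MeasureTheory.integral_const_mul]
    have hgauss : (∫ z : ℝ, Real.exp (-(1/2 : ℝ) * z ^ 2)) = Real.sqrt (2 * π) := by
      rw [integral_gaussian]
      rw [show π / (1/2 : ℝ) = 2 * π by ring]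
    rw [hgauss]
    have h2π : (0:ℝ) < Real.sqrt (2 * π) := Real.sqrt_pos.2 (by positivity)
    field_simp
  rw [hg] at hlim
  apply hlim.congr'
  filter_upwards [self_mem_nhdsWithin] with t ht
  exact (key t ht).symm

/-- **Mehler formula.** The Mehler kernel is the heat kernel of the harmonic
oscillator `Ω = -ℏ² d²/dx² + x²`: it satisfies `∂ₜP = -( -ℏ² ∂ₓ² + x² ) P` for `t > 0`, and
`P(t,·,·) → δ` as `t → 0⁺` (i.e. `∫ P(t,x,y) u(y) dy → u(x)` for continuous compactly
supported `u`); equivalently, `exp(-tΩ)` has integral kernel `P(t,x,y)`. -/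
theorem mehlerKernel_is_harmonic_oscillator_heat_kernel (ℏ : ℝ) (hℏ : 0 < ℏ) :
    (∀ t : ℝ, 0 < t → ∀ x y : ℝ,
      HasDerivAt (fun s => mehlerKernel ℏ s x y)
        (ℏ ^ 2 * deriv (fun x' => deriv (fun x'' => mehlerKernel ℏ t x'' y) x') x
          - x ^ 2 * mehlerKernel ℏ t x y) t) ∧
    (∀ u : ℝ → ℝ, Continuous u → HasCompactSupport u → ∀ x : ℝ,
      Filter.Tendsto (fun t => ∫ y : ℝ, mehlerKernel ℏ t x y * u y)
        (𝓝[>] 0) (𝓝 (u x))) :=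
  ⟨fun t ht x y => part1 ℏ hℏ t ht x y, fun u hu hcs x => part2 ℏ hℏ u hu hcs x⟩
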